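/- Let d ≥ 1, let Ω ⊆ ℝ^d be open with ∂Ω a (d−1)-set, and let δ ∈ (0,1), C₁, Ĉ₂, η̂, c > 0. Set η := min{1, η̂}. Then there exists C₂ > 0, depending only on d, δ, C₁, Ĉ₂, η̂, c and the (d−1)-set constants of ∂Ω, such that the following holds: for every k ∈ ℕ and every nonempty measurable set Q ⊆ Ω with diam(Q) ≤ C₁ δ^k, |Q| ≥ c δ^{kd}, and |{x ∈ Q : dist(x, Ω ∖ Q) ≤ t δ^k}| ≤ Ĉ₂ t^{η̂} |Q| for all t > 0, one has |{x ∈ Q : dist(x, ℝ^d ∖ Q) ≤ t δ^k}| ≤ C₂ t^{η} |Q| for all t > 0. -/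

import Mathlib

open MeasureTheory Metric Set

private lemma aux_cover (d : ℕ) (ρ : ℝ) :
    ∃ s : Finset (EuclideanSpace ℝ (Fin d)), ∀ z : EuclideanSpace ℝ (Fin d),
      closedBall z ρ ⊆ ⋃ i ∈ s, ball (z + i) 4⁻¹ := by
  obtain ⟨s, hs⟩ := (isCompact_closedBall (0 : EuclideanSpace ℝ (Fin d)) ρ).elim_finite_subcover
      (fun i : EuclideanSpace ℝ (Fin d) => ball i 4⁻¹) (fun _ => isOpen_ball)
      (fun x _ => mem_iUnion.2 ⟨x, mem_ball_self (by norm_num)⟩)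
  refine ⟨s, fun z x hx => ?_⟩
  have hx' : x - z ∈ closedBall (0 : EuclideanSpace ℝ (Fin d)) ρ := by
    simpa [dist_eq_norm] using hx
  obtain ⟨i, hi, hxi⟩ := mem_iUnion₂.1 (hs hx')
  refine mem_iUnion₂.2 ⟨i, hi, ?_⟩
  simp only [mem_ball, dist_eq_norm] at hxi ⊢
  convert hxi using 2
  abel

private lemma aux_global (d : ℕ) (Γ : Set (EuclideanSpace ℝ (Fin d))) (b₂ : ℝ)
    (hup : ∀ y ∈ Γ, μH[(d : ℝ) - 1] (Γ ∩ ball y (1/2)) ≤ ENNReal.ofReal b₂)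
    (ρ : ℝ) :
    ∃ N : ℕ, ∀ z : EuclideanSpace ℝ (Fin d),
      μH[(d : ℝ) - 1] (Γ ∩ closedBall z ρ) ≤ N * ENNReal.ofReal b₂ := by
  obtain ⟨s, hs⟩ := aux_cover d ρ
  refine ⟨s.card, fun z => ?_⟩
  have hsub : Γ ∩ closedBall z ρ ⊆ ⋃ i ∈ s, Γ ∩ ball (z + i) 4⁻¹ := by
    intro x hx
    obtain ⟨i, hi, hxi⟩ := mem_iUnion₂.1 (hs z hx.2)
    exact mem_iUnion₂.2 ⟨i, hi, hx.1, hxi⟩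
  calc μH[(d : ℝ) - 1] (Γ ∩ closedBall z ρ)
      ≤ ∑ i ∈ s, μH[(d : ℝ) - 1] (Γ ∩ ball (z + i) 4⁻¹) :=
        (measure_mono hsub).trans (measure_biUnion_finset_le s _)
    _ ≤ ∑ _i ∈ s, ENNReal.ofReal b₂ := by
        refine Finset.sum_le_sum fun i _ => ?_
        rcases (Γ ∩ ball (z + i) 4⁻¹).eq_empty_or_nonempty with h | ⟨y, hyΓ, hyi⟩
        · simp [h]
        · refine le_trans (measure_mono ?_) (hup y hyΓ)
          intro w hw
          refine ⟨hw.1, ?_⟩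
          have h0 : dist w y ≤ dist w (z + i) + dist (z + i) y := dist_triangle _ _ _
          have h1 : dist w (z + i) < 4⁻¹ := hw.2
          have h2 : dist (z + i) y < 4⁻¹ := by rw [dist_comm]; exact hyi
          simp only [mem_ball]
          linarith
    _ = s.card * ENNReal.ofReal b₂ := by
        rw [Finset.sum_const, nsmul_eq_mul]

set_option maxHeartbeats 2000000 in
/-- Estimate for the **complete** inner boundary strip of a dyadic cube: if `∂Ω` is a
`(d-1)`-set, then the control of the strip near the relative boundary (property (6) of the
dyadic decomposition) upgrades to control of the strip near the full boundary of `Q`,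
with exponent `η = min 1 η̂`. -/
theorem complete_boundary_strip_estimate
    (d : ℕ) (hd : 1 ≤ d)
    (Ω : Set (EuclideanSpace ℝ (Fin d))) (hΩopen : IsOpen Ω)
    (b₁ b₂ : ℝ) (hb₁ : 0 < b₁) (hb₁₂ : b₁ ≤ b₂)
    (hAD : ∀ x ∈ frontier Ω, ∀ r : ℝ, 0 < r → r ≤ 1 →
      ENNReal.ofReal (b₁ * r ^ ((d : ℝ) - 1)) ≤ μH[(d : ℝ) - 1] (frontier Ω ∩ ball x r) ∧
        μH[(d : ℝ) - 1] (frontier Ω ∩ ball x r) ≤ ENNReal.ofReal (b₂ * r ^ ((d : ℝ) - 1)))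
    (δ C₁ Chat₂ ηhat c : ℝ) (hδ0 : 0 < δ) (hδ1 : δ < 1)
    (hC₁ : 0 < C₁) (hChat₂ : 0 < Chat₂) (hηhat : 0 < ηhat) (hc : 0 < c) :
    ∃ C₂ > 0, ∀ (k : ℕ) (Q : Set (EuclideanSpace ℝ (Fin d))),
      Q.Nonempty → MeasurableSet Q → Q ⊆ Ω →
      EMetric.diam Q ≤ ENNReal.ofReal (C₁ * δ ^ k) →
      ENNReal.ofReal (c * δ ^ (k * d)) ≤ volume Q →
      (∀ t : ℝ, 0 < t →
        volume {x ∈ Q | EMetric.infEdist x (Ω \ Q) ≤ ENNReal.ofReal (t * δ ^ k)} ≤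
          ENNReal.ofReal (Chat₂ * t ^ ηhat) * volume Q) →
      ∀ t : ℝ, 0 < t →
        volume {x ∈ Q | EMetric.infEdist x Qᶜ ≤ ENNReal.ofReal (t * δ ^ k)} ≤
          ENNReal.ofReal (C₂ * t ^ min 1 ηhat) * volume Q := by
  have hd' : (0:ℝ) ≤ (d:ℝ) - 1 := by
    have h1 : (1:ℝ) ≤ d := by exact_mod_cast hd
    linarith
  have hcast : ((d : ℝ) - 1) = ((d - 1 : ℕ) : ℝ) := by
    rw [Nat.cast_sub hd]; norm_num
  have hb₂ : (0:ℝ) < b₂ := lt_of_lt_of_le hb₁ hb₁₂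
  set Γ := frontier Ω with hΓdef
  obtain ⟨N, hN⟩ := aux_global d Γ b₂
    (fun y hy => le_trans (hAD y hy (1/2) (by norm_num) (by norm_num)).2
      (ENNReal.ofReal_le_ofReal (by
        have h1 : ((1:ℝ)/2) ^ ((d:ℝ)-1) ≤ 1 :=
          Real.rpow_le_one (by norm_num) (by norm_num) hd'
        nlinarith)))
    (C₁ + 6)
  set ρ : ℝ := C₁ + 6 with hρdef
  have hρ : 0 < ρ := by positivity
  set K₂ : ℝ := (1 + N) * b₂ * ρ ^ (d - 1) with hK₂def
  have hK₂ : 0 < K₂ := by positivity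
  set ω : ℝ := (volume (ball (0 : EuclideanSpace ℝ (Fin d)) 1)).toReal with hωdef
  have hω : 0 ≤ ω := ENNReal.toReal_nonneg
  set A : ℝ := 3 ^ d * ω * K₂ / b₁ with hAdef
  have hA : 0 ≤ A := by positivity
  refine ⟨max 1 (Chat₂ + A / c), lt_of_lt_of_le one_pos (le_max_left _ _), ?_⟩
  intro k Q hQne hQm hQΩ hdiam hvol h6 t ht
  set η : ℝ := min 1 ηhat with hηdef
  have hη0 : 0 < η := lt_min one_pos hηhat
  have hδk : 0 < δ ^ k := pow_pos hδ0 k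
  have hδk1 : δ ^ k ≤ 1 := pow_le_one₀ hδ0.le hδ1.le
  by_cases ht1 : 1 ≤ t
  · have h1 : (1:ℝ) ≤ max 1 (Chat₂ + A / c) * t ^ η := by
      have h2 : (1:ℝ) ≤ t ^ η := Real.one_le_rpow ht1 hη0.le
      have h3 : (1:ℝ) ≤ max 1 (Chat₂ + A / c) := le_max_left _ _
      nlinarith
    calc volume {x ∈ Q | EMetric.infEdist x Qᶜ ≤ ENNReal.ofReal (t * δ ^ k)}
        ≤ volume Q := measure_mono (sep_subset _ _)
      _ ≤ ENNReal.ofReal (max 1 (Chat₂ + A / c) * t ^ η) * volume Q := by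
          refine le_mul_of_one_le_left zero_le ?_
          rw [← ENNReal.ofReal_one]
          exact ENNReal.ofReal_le_ofReal h1
  push_neg at ht1
  set ε : ℝ := t * δ ^ k with hεdef
  have hε0 : 0 < ε := mul_pos ht hδk
  have hε1 : ε ≤ 1 := by nlinarith
  have hεδ : ε ≤ δ ^ k := by nlinarith
  set S₁ := {x ∈ Q | EMetric.infEdist x (Ω \ Q) ≤ ENNReal.ofReal ε} with hS₁def
  set S₂ := {x ∈ Q | EMetric.infEdist x Ωᶜ ≤ ENNReal.ofReal ε} with hS₂def
  have hQc : Qᶜ = (Ω \ Q) ∪ Ωᶜ := by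
    ext x
    simp only [mem_compl_iff, mem_union, mem_diff]
    constructor
    · intro hx
      by_cases hxΩ : x ∈ Ω
      · exact Or.inl ⟨hxΩ, hx⟩
      · exact Or.inr hxΩ
    · rintro (⟨_, hx⟩ | hx)
      · exact hx
      · exact fun h => hx (hQΩ h)
  have hsplit : {x ∈ Q | EMetric.infEdist x Qᶜ ≤ ENNReal.ofReal ε} ⊆ S₁ ∪ S₂ := by
    intro x hx
    have h1 := hx.2
    rw [hQc, EMetric.infEdist, Metric.infEDist_union] at h1
    rcases min_le_iff.1 h1 with h | h
    · exact Or.inl ⟨hx.1, h⟩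
    · exact Or.inr ⟨hx.1, h⟩
  have hb1 : volume S₁ ≤ ENNReal.ofReal (Chat₂ * t ^ η) * volume Q := by
    refine le_trans (h6 t ht) (mul_le_mul_left (ENNReal.ofReal_le_ofReal ?_) _)
    have h1 : t ^ ηhat ≤ t ^ η :=
      Real.rpow_le_rpow_of_exponent_ge ht ht1.le (min_le_right _ _)
    nlinarith
  have hb2 : volume S₂ ≤ ENNReal.ofReal (A * t * δ ^ (k * d)) := by
    rcases S₂.eq_empty_or_nonempty with hS₂e | ⟨x₀, hx₀⟩
    · simp [hS₂e]
    have hΩne : Ω ≠ univ := by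
      intro h
      have h2 := hx₀.2
      rw [h, compl_univ, EMetric.infEdist, Metric.infEDist_empty, top_le_iff] at h2
      exact ENNReal.ofReal_ne_top h2
    have hnear : ∀ x ∈ S₂, ∃ y ∈ Γ, dist x y ≤ ε := by
      intro x hx
      obtain ⟨y, hyΓ, hy⟩ := exists_mem_frontier_infDist_compl_eq_dist (hQΩ hx.1) hΩne
      refine ⟨y, hyΓ, ?_⟩
      rw [← hy]
      exact ENNReal.toReal_le_of_le_ofReal hε0.le hx.2
    obtain ⟨z, hzΓ, hzx₀⟩ := hnear x₀ hx₀
    have hdistQ : ∀ x ∈ Q, dist x x₀ ≤ C₁ * δ ^ k := by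
      intro x hx
      have h1 : edist x x₀ ≤ ENNReal.ofReal (C₁ * δ ^ k) :=
        le_trans (EMetric.edist_le_diam_of_mem hx hx₀.1) hdiam
      rw [dist_edist]
      exact ENNReal.toReal_le_of_le_ofReal (by positivity) h1
    have hball : ∀ x ∈ S₂, ∀ y, dist x y ≤ ε → ball y ε ⊆ ball z (ρ * δ ^ k) := by
      intro x hx y hxy w hw
      have h1 : dist w y < ε := hw
      have h2 : dist x x₀ ≤ C₁ * δ ^ k := hdistQ x hx.1
      have h4 := dist_triangle4 w y x x₀
      have h5 := dist_triangle w x₀ z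
      have hyx : dist y x ≤ ε := by rw [dist_comm]; exact hxy
      have h6' : dist w z < ε + ε + (C₁ * δ ^ k) + ε := by linarith
      have h7 : ε + ε + (C₁ * δ ^ k) + ε ≤ (C₁ + 3) * δ ^ k := by nlinarith
      have h8 : (C₁ + 3) * δ ^ k < ρ * δ ^ k := by
        rw [hρdef]; nlinarith
      simp only [mem_ball]
      linarith
    set B : Set (EuclideanSpace ℝ (Fin d)) := Γ ∩ ball z (ρ * δ ^ k) with hBdef
    have hBm : MeasurableSet B := isClosed_frontier.measurableSet.inter measurableSet_ball
    set ν := (μH[(d : ℝ) - 1]).restrict B with hνdef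
    have hνuniv : ν univ ≤ ENNReal.ofReal (K₂ * (δ ^ k) ^ (d - 1)) := by
      rw [hνdef, Measure.restrict_apply_univ]
      rcases le_or_gt (ρ * δ ^ k) 1 with hr | hr
      · refine le_trans (hAD z hzΓ (ρ * δ ^ k) (by positivity) hr).2
          (ENNReal.ofReal_le_ofReal ?_)
        rw [hcast, Real.rpow_natCast, mul_pow, hK₂def]
        have h1 : (0:ℝ) ≤ ρ ^ (d-1) * (δ ^ k) ^ (d-1) := by positivity
        have h3 : b₂ * (ρ ^ (d-1) * (δ ^ k) ^ (d-1)) ≤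
            (1 + N) * (b₂ * (ρ ^ (d-1) * (δ ^ k) ^ (d-1))) := by
          refine le_mul_of_one_le_left (by positivity) ?_
          have h2 : (0:ℝ) ≤ (N:ℝ) := Nat.cast_nonneg N
          linarith
        calc b₂ * (ρ ^ (d-1) * (δ ^ k) ^ (d-1))
            ≤ (1 + N) * (b₂ * (ρ ^ (d-1) * (δ ^ k) ^ (d-1))) := h3
          _ = (1 + ↑N) * b₂ * ρ ^ (d-1) * (δ ^ k) ^ (d-1) := by ring
      · have hρρ : ρ * δ ^ k ≤ ρ := by
          calc ρ * δ ^ k ≤ ρ * 1 := mul_le_mul_of_nonneg_left hδk1 hρ.le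
            _ = ρ := mul_one ρ
        have hsub : B ⊆ Γ ∩ closedBall z ρ := by
          intro w hw
          exact ⟨hw.1, le_trans hw.2.le hρρ⟩
        refine le_trans (measure_mono hsub) (le_trans (hN z) ?_)
        rw [← ENNReal.ofReal_natCast N, ← ENNReal.ofReal_mul (Nat.cast_nonneg N)]
        refine ENNReal.ofReal_le_ofReal ?_
        have h2 : (1:ℝ) ≤ (ρ * δ ^ k) ^ (d-1) := one_le_pow₀ hr.le
        rw [mul_pow] at h2
        calc (N:ℝ) * b₂ ≤ (1 + N) * b₂ := by
              have h3 : (0:ℝ) ≤ (N:ℝ) := Nat.cast_nonneg N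
              nlinarith
          _ ≤ (1 + N) * b₂ * (ρ ^ (d-1) * (δ ^ k) ^ (d-1)) :=
              le_mul_of_one_le_right (by positivity) h2
          _ = (1 + ↑N) * b₂ * ρ ^ (d-1) * (δ ^ k) ^ (d-1) := by ring
    haveI : IsFiniteMeasure ν := ⟨lt_of_le_of_lt hνuniv ENNReal.ofReal_lt_top⟩
    have hlow : ∀ x ∈ S₂, ENNReal.ofReal (b₁ * ε ^ ((d:ℝ) - 1)) ≤ ν (ball x (3 * ε)) := by
      intro x hx
      obtain ⟨y, hyΓ, hxy⟩ := hnear x hx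
      have hby : ball y ε ⊆ ball z (ρ * δ ^ k) := hball x hx y hxy
      have hsub2 : Γ ∩ ball y ε ⊆ B ∩ ball x (3 * ε) := by
        intro w hw
        refine ⟨⟨hw.1, hby hw.2⟩, ?_⟩
        have h1 : dist w y < ε := hw.2
        have h2 : dist w x ≤ dist w y + dist y x := dist_triangle _ _ _
        have hyx : dist y x ≤ ε := by rw [dist_comm]; exact hxy
        simp only [mem_ball]
        linarith
      calc ENNReal.ofReal (b₁ * ε ^ ((d:ℝ)-1)) ≤ μH[(d:ℝ)-1] (Γ ∩ ball y ε) :=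
            (hAD y hyΓ ε hε0 hε1).1
        _ ≤ μH[(d:ℝ)-1] (B ∩ ball x (3*ε)) := measure_mono hsub2
        _ = ν (ball x (3*ε)) := by
            rw [hνdef, Measure.restrict_apply measurableSet_ball, inter_comm]
    have hS₂m : MeasurableSet S₂ :=
      hQm.inter ((isClosed_le EMetric.continuous_infEdist continuous_const).measurableSet)
    set F : EuclideanSpace ℝ (Fin d) × EuclideanSpace ℝ (Fin d) → ENNReal :=
      fun p => if dist p.1 p.2 < 3 * ε then 1 else 0 with hFdef
    have hFm : Measurable F := by
      refine Measurable.ite ?_ measurable_const measurable_const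
      exact measurableSet_lt measurable_dist measurable_const
    have hkey1 : ∀ x, ν (ball x (3*ε)) = ∫⁻ y, F (x, y) ∂ν := by
      intro x
      rw [← lintegral_indicator_one (μ := ν) measurableSet_ball]
      refine lintegral_congr fun y => ?_
      simp only [hFdef]
      rw [dist_comm x y]
      by_cases h : dist y x < 3 * ε
      · rw [if_pos h, Set.indicator_of_mem (mem_ball.2 h)]
        rfl
      · rw [if_neg h, Set.indicator_of_notMem (fun hh => h (mem_ball.1 hh))]
    have hkey2 : ∀ y, volume (ball y (3*ε)) = ∫⁻ x, F (x, y) ∂volume := by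
      intro y
      rw [← lintegral_indicator_one (μ := volume) measurableSet_ball]
      refine lintegral_congr fun x => ?_
      simp only [hFdef]
      by_cases h : dist x y < 3 * ε
      · rw [if_pos h, Set.indicator_of_mem (mem_ball.2 h)]
        rfl
      · rw [if_neg h, Set.indicator_of_notMem (fun hh => h (mem_ball.1 hh))]
    have hswap : ∫⁻ x, (∫⁻ y, F (x, y) ∂ν) ∂volume = ∫⁻ y, (∫⁻ x, F (x, y) ∂volume) ∂ν :=
      lintegral_lintegral_swap hFm.aemeasurable
    have hchain : ENNReal.ofReal (b₁ * ε ^ ((d:ℝ)-1)) * volume S₂ ≤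
        ENNReal.ofReal (3 ^ d * ε ^ d * ω * (K₂ * (δ ^ k) ^ (d-1))) := by
      calc ENNReal.ofReal (b₁ * ε ^ ((d:ℝ)-1)) * volume S₂
          = ∫⁻ _ in S₂, ENNReal.ofReal (b₁ * ε ^ ((d:ℝ)-1)) ∂volume :=
            (setLIntegral_const _ _).symm
        _ ≤ ∫⁻ x in S₂, ν (ball x (3*ε)) ∂volume := setLIntegral_mono' hS₂m hlow
        _ ≤ ∫⁻ x, ν (ball x (3*ε)) ∂volume := setLIntegral_le_lintegral _ _
        _ = ∫⁻ x, ∫⁻ y, F (x, y) ∂ν ∂volume := lintegral_congr fun x => hkey1 x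
        _ = ∫⁻ y, ∫⁻ x, F (x, y) ∂volume ∂ν := hswap
        _ = ∫⁻ y, volume (ball y (3*ε)) ∂ν := lintegral_congr fun y => (hkey2 y).symm
        _ = ∫⁻ _, (ENNReal.ofReal ((3*ε) ^ d) *
              volume (ball (0 : EuclideanSpace ℝ (Fin d)) 1)) ∂ν := by
            refine lintegral_congr fun y => ?_
            rw [Measure.addHaar_ball_of_pos volume y (by positivity : (0:ℝ) < 3*ε),
              finrank_euclideanSpace_fin]
        _ = ENNReal.ofReal ((3*ε) ^ d) * volume (ball (0 : EuclideanSpace ℝ (Fin d)) 1) *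
              ν univ := lintegral_const _
        _ ≤ ENNReal.ofReal ((3*ε) ^ d) * ENNReal.ofReal ω *
              ENNReal.ofReal (K₂ * (δ ^ k) ^ (d-1)) := by
            have hV : volume (ball (0 : EuclideanSpace ℝ (Fin d)) 1) = ENNReal.ofReal ω :=
              (ENNReal.ofReal_toReal measure_ball_lt_top.ne).symm
            rw [hV]
            exact mul_le_mul_right hνuniv _
        _ = ENNReal.ofReal (3 ^ d * ε ^ d * ω * (K₂ * (δ ^ k) ^ (d-1))) := by
            rw [← ENNReal.ofReal_mul (by positivity), ← ENNReal.ofReal_mul (by positivity)]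
            congr 1
            rw [mul_pow]
    have hεpow : ε ^ ((d:ℝ)-1) = ε ^ (d-1) := by rw [hcast, Real.rpow_natCast]
    have hP0 : (0:ℝ) < b₁ * ε ^ (d-1) := by positivity
    have hreal : 3 ^ d * ε ^ d * ω * (K₂ * (δ ^ k) ^ (d-1))
        = (A * t * δ ^ (k * d)) * (b₁ * ε ^ (d-1)) := by
      have hd1 : d = (d - 1) + 1 := (Nat.succ_pred_eq_of_pos hd).symm
      have h1 : ε ^ d = ε ^ (d-1) * ε := by
        conv_lhs => rw [hd1, pow_succ]
      have h2 : δ ^ (k * d) = (δ ^ k) ^ (d-1) * δ ^ k := by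
        rw [pow_mul]
        conv_lhs => rw [hd1, pow_succ]
      rw [hAdef, h1, h2, hεdef]
      field_simp
    have hfin : volume S₂ * ENNReal.ofReal (b₁ * ε ^ (d-1)) ≤
        ENNReal.ofReal (A * t * δ ^ (k*d)) * ENNReal.ofReal (b₁ * ε ^ (d-1)) := by
      rw [← ENNReal.ofReal_mul (by positivity), ← hreal, mul_comm]
      rw [← hεpow]
      exact hchain
    exact (ENNReal.mul_le_mul_iff_left (ne_of_gt (ENNReal.ofReal_pos.2 hP0))
      ENNReal.ofReal_ne_top).1 hfin
  have hb2' : volume S₂ ≤ ENNReal.ofReal (A / c * t ^ η) * volume Q := by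
    refine le_trans hb2 ?_
    have heq : A * t * δ ^ (k*d) = (A / c * t) * (c * δ ^ (k*d)) := by
      field_simp
    rw [heq, ENNReal.ofReal_mul (by positivity)]
    refine mul_le_mul' (ENNReal.ofReal_le_ofReal ?_) hvol
    have ht' : t ≤ t ^ η := by
      nth_rewrite 1 [← Real.rpow_one t]
      exact Real.rpow_le_rpow_of_exponent_ge ht ht1.le (min_le_left _ _)
    have hAc : (0:ℝ) ≤ A / c := by positivity
    nlinarith
  calc volume {x ∈ Q | EMetric.infEdist x Qᶜ ≤ ENNReal.ofReal ε}
      ≤ volume (S₁ ∪ S₂) := measure_mono hsplit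
    _ ≤ volume S₁ + volume S₂ := measure_union_le _ _
    _ ≤ ENNReal.ofReal (Chat₂ * t ^ η) * volume Q + ENNReal.ofReal (A / c * t ^ η) * volume Q :=
        add_le_add hb1 hb2'
    _ = ENNReal.ofReal ((Chat₂ + A / c) * t ^ η) * volume Q := by
        rw [← add_mul, ← ENNReal.ofReal_add (by positivity) (by positivity), add_mul]
    _ ≤ ENNReal.ofReal (max 1 (Chat₂ + A / c) * t ^ η) * volume Q := by
        refine mul_le_mul_left (ENNReal.ofReal_le_ofReal ?_) _
        have h1 : (0:ℝ) ≤ t ^ η := Real.rpow_nonneg ht.le η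
        nlinarith [le_max_right (1:ℝ) (Chat₂ + A / c)]
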